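/- Let n ≥ 1 and let T : ℝⁿ → ℝⁿ be a Borel measurable lower triangular bijection such that for every k and every x ∈ ℝⁿ the diagonal section s_{k,x} : t ↦ T(Function.update x k t)_k is a strictly increasing continuous bijection of ℝ onto ℝ that maps Lebesgue-null sets of ℝ to Lebesgue-null sets (Luzin's condition (N); for an increasing continuous function this is equivalent to absolute continuity on every compact interval). Define det∇T(x) := ∏_{k} deriv s_{k,x} (x_k), where the derivative exists for Lebesgue-almost every x. Then for every Lebesgue-integrable function φ : ℝⁿ → ℝ, ∫ φ(y) dy = ∫ φ(T(x)) · det∇T(x) dx. In particular, for any probability density ρ on ℝⁿ, the pullback of the measure volume.withDensity ρ under T (i.e., its pushforward by T⁻¹) is absolutely continuous with respect to Lebesgue measure, with density x ↦ ρ(T(x)) · det∇T(x) almost everywhere. -/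

import Mathlib

open MeasureTheory

/-- A map `T : ℝⁿ → ℝⁿ` is lower triangular if its `k`-th component depends only on the
first `k` coordinates. -/
def LowerTriangular {n : ℕ} (T : (Fin n → ℝ) → (Fin n → ℝ)) : Prop :=
  ∀ (k : Fin n) (x y : Fin n → ℝ), (∀ j : Fin n, j ≤ k → x j = y j) → T x k = T y k


open Set Filter Topology Function

section Aux

/-- Rational Cauchy criterion for differentiability. -/
def Crit (f : ℝ → ℝ) (t : ℝ) : Prop :=
  ∀ ε : ℚ, 0 < ε → ∃ δ : ℚ, 0 < δ ∧ ∀ q q' : ℚ, q ≠ 0 → q' ≠ 0 → |q| < δ → |q'| < δ →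
    |(f (t + q) - f t) / q - (f (t + q') - f t) / q'| ≤ (ε : ℝ)

lemma slope_eq (f : ℝ → ℝ) (t h : ℝ) :
    slope f t (t + h) = (f (t + h) - f t) / h := by
  rw [slope_def_field, add_sub_cancel_left]

lemma crit_of_differentiableAt {f : ℝ → ℝ} {t : ℝ} (h : DifferentiableAt ℝ f t) :
    Crit f t := by
  intro ε hε
  have hs : Tendsto (slope f t) (𝓝[≠] t) (𝓝 (deriv f t)) :=
    hasDerivAt_iff_tendsto_slope.1 h.hasDerivAt
  rw [Metric.tendsto_nhdsWithin_nhds] at hs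
  obtain ⟨δr, hδr, hδ⟩ := hs ((ε : ℝ) / 2) (by positivity)
  obtain ⟨δ, hδ0, hδlt⟩ := exists_rat_btwn (half_pos hδr)
  refine ⟨δ, by exact_mod_cast hδ0, fun q q' hq hq' hqδ hq'δ => ?_⟩
  have key : ∀ r : ℚ, r ≠ 0 → |r| < δ →
      dist ((f (t + r) - f t) / r) (deriv f t) < (ε : ℝ) / 2 := by
    intro r hr hrδ
    have h1 : (t + r : ℝ) ∈ ({t}ᶜ : Set ℝ) := by
      simp only [mem_compl_iff, mem_singleton_iff, add_eq_left]
      exact_mod_cast hr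
    have h2 : dist (t + (r : ℝ)) t < δr := by
      rw [Real.dist_eq, add_sub_cancel_left]
      have : |(r : ℝ)| < (δ : ℝ) := by exact_mod_cast hrδ
      linarith
    have := hδ h1 h2
    rwa [slope_eq f t (r : ℝ)] at this
  calc |(f (t + q) - f t) / q - (f (t + q') - f t) / q'|
      = dist ((f (t + q) - f t) / q) ((f (t + q') - f t) / q') := (Real.dist_eq _ _).symm
    _ ≤ dist ((f (t + q) - f t) / q) (deriv f t)
        + dist ((f (t + q') - f t) / q') (deriv f t) := dist_triangle_right _ _ _
    _ ≤ (ε : ℝ) / 2 + (ε : ℝ) / 2 := add_le_add (key q hq hqδ).le (key q' hq' hq'δ).le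
    _ = (ε : ℝ) := by ring

lemma differentiableAt_of_crit {f : ℝ → ℝ} {t : ℝ} (hf : Continuous f) (h : Crit f t) :
    DifferentiableAt ℝ f t := by
  set qm : ℕ → ℚ := fun m => 1 / (m + 1) with hqm
  have hqm_pos : ∀ m, 0 < qm m := fun m => by positivity
  have hqm_ne : ∀ m, qm m ≠ 0 := fun m => (hqm_pos m).ne'
  have hqm_small : ∀ δ : ℚ, 0 < δ → ∃ N : ℕ, ∀ m ≥ N, |qm m| < δ := by
    intro δ hδ
    obtain ⟨N, hN⟩ := exists_nat_gt (1 / δ)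
    refine ⟨N, fun m hm => ?_⟩
    rw [abs_of_pos (hqm_pos m), hqm]
    rw [div_lt_iff₀ (by positivity)]
    rw [div_lt_iff₀ hδ] at hN
    have : (N : ℚ) ≤ (m : ℚ) := by exact_mod_cast hm
    nlinarith
  set u : ℕ → ℝ := fun m => (f (t + (qm m : ℝ)) - f t) / (qm m : ℝ) with hu
  have hcauchy : CauchySeq u := by
    rw [Metric.cauchySeq_iff]
    intro ε hε
    obtain ⟨ε', hε'0, hε'⟩ := exists_rat_btwn hε
    have hε'0' : 0 < ε' := by exact_mod_cast hε'0
    obtain ⟨δ, hδ0, hδ⟩ := h ε' hε'0'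
    obtain ⟨N, hN⟩ := hqm_small δ hδ0
    refine ⟨N, fun m hm n hn => ?_⟩
    have := hδ (qm m) (qm n) (hqm_ne m) (hqm_ne n) (hN m hm) (hN n hn)
    rw [Real.dist_eq]
    exact lt_of_le_of_lt this hε'
  obtain ⟨L, hL⟩ := cauchySeq_tendsto_of_complete hcauchy
  -- bound for all small rationals
  have Bq : ∀ (ε δ : ℚ), 0 < ε →
      (∀ q q' : ℚ, q ≠ 0 → q' ≠ 0 → |q| < δ → |q'| < δ →
        |(f (t + q) - f t) / q - (f (t + q') - f t) / q'| ≤ (ε : ℝ)) →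
      ∀ q : ℚ, q ≠ 0 → |q| < δ → |(f (t + q) - f t) / q - L| ≤ (ε : ℝ) := by
    intro ε δ hε hδ q hq hqδ
    obtain ⟨N, hN⟩ := hqm_small δ (lt_of_le_of_lt (abs_nonneg q) hqδ)
    have htend : Tendsto (fun m => |(f (t + q) - f t) / q - u m|) atTop
        (𝓝 |(f (t + q) - f t) / q - L|) :=
      ((tendsto_const_nhds.sub hL).abs)
    refine le_of_tendsto htend ?_
    filter_upwards [eventually_ge_atTop N] with m hm
    exact hδ q (qm m) hq (hqm_ne m) hqδ (hN m hm)
  have hd : HasDerivAt f L t := by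
    rw [hasDerivAt_iff_tendsto_slope, Metric.tendsto_nhdsWithin_nhds]
    intro ε hε
    obtain ⟨ε', hε'0, hε'half⟩ := exists_rat_btwn (half_pos hε)
    have hε'0' : 0 < ε' := by exact_mod_cast hε'0
    obtain ⟨δ, hδ0, hδ⟩ := h ε' hε'0'
    refine ⟨(δ : ℝ), by exact_mod_cast hδ0, fun y hy hydist => ?_⟩
    have hyne : y - t ≠ 0 := sub_ne_zero.2 hy
    set F : ℝ → ℝ := fun s => (f (t + s) - f t) / s with hF
    have hFcont : ContinuousAt F (y - t) := by
      exact ContinuousAt.div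
        (((hf.comp (continuous_const.add continuous_id)).sub continuous_const).continuousAt)
        continuousAt_id hyne
    have hslope : slope f t y = F (y - t) := by
      rw [hF]; simp only []
      rw [slope_def_field, add_sub_cancel]
    have hW : {s : ℝ | dist (F s) (F (y - t)) < ε'} ∈ 𝓝 (y - t) := by
      have := hFcont (Metric.ball_mem_nhds (F (y - t)) (by exact_mod_cast hε'0 : (0:ℝ) < ε'))
      exact this
    have hV : IsOpen (Metric.ball (0:ℝ) δ \ {0}) :=
      Metric.isOpen_ball.sdiff isClosed_singleton
    have hyV : y - t ∈ Metric.ball (0:ℝ) δ \ {0} := by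
      refine ⟨?_, hyne⟩
      rw [Metric.mem_ball, Real.dist_eq, sub_zero]
      rwa [Real.dist_eq] at hydist
    have hWV : {s : ℝ | dist (F s) (F (y - t)) < ε'} ∩ (Metric.ball (0:ℝ) δ \ {0}) ∈ 𝓝 (y - t) :=
      inter_mem hW (hV.mem_nhds hyV)
    obtain ⟨O, hOsub, hOopen, hyO⟩ := mem_nhds_iff.1 hWV
    obtain ⟨qr, hqr⟩ : ∃ q : ℚ, (q : ℝ) ∈ O := by
      exact (Rat.denseRange_cast (𝕜 := ℝ)).exists_mem_open hOopen ⟨_, hyO⟩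
    have hsub := hOsub hqr
    have hq_ne : qr ≠ 0 := by
      have h2 := hsub.2.2
      simp only [mem_singleton_iff] at h2
      exact fun hc => h2 (by exact_mod_cast hc)
    have hq_small : |qr| < δ := by
      have := hsub.2.1
      rw [Metric.mem_ball, Real.dist_eq, sub_zero] at this
      exact_mod_cast this
    have hq_close : dist (F qr) (F (y - t)) < ε' := hsub.1
    have hq_bound : |(f (t + qr) - f t) / qr - L| ≤ (ε' : ℝ) :=
      Bq ε' δ hε'0' hδ qr hq_ne hq_small
    rw [hslope, Real.dist_eq]
    calc |F (y - t) - L| ≤ |F (y - t) - F qr| + |F qr - L| := abs_sub_le _ _ _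
      _ < ε' + ε' := by
          refine add_lt_add_of_lt_of_le ?_ hq_bound
          rw [abs_sub_comm]
          simpa [Real.dist_eq, F] using hq_close
      _ ≤ ε / 2 + ε / 2 := by
          have : (ε' : ℝ) < ε / 2 := hε'half
          linarith
      _ = ε := by ring
  exact hd.differentiableAt

section
variable {α : Type*} [MeasurableSpace α]

lemma measurable_ofReal_deriv_param (g : α → ℝ → ℝ) (p : α → ℝ)
    (hg : Measurable (fun q : α × ℝ => g q.1 q.2)) (hp : Measurable p)
    (hgc : ∀ a, Continuous (g a)) :
    Measurable (fun a => ENNReal.ofReal (deriv (g a) (p a))) := by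
  classical
  set slq : ℚ → α → ℝ := fun q a => (g a (p a + q) - g a (p a)) / q with hslq
  have hslq_meas : ∀ q : ℚ, Measurable (slq q) := by
    intro q
    have h1 : Measurable fun a => g a (p a + q) :=
      hg.comp (measurable_id.prodMk (hp.add measurable_const))
    have h2 : Measurable fun a => g a (p a) :=
      hg.comp (measurable_id.prodMk hp)
    exact (h1.sub h2).div measurable_const
  set Diff : Set α := ⋂ (ε : {ε : ℚ // 0 < ε}), ⋃ (δ : {δ : ℚ // 0 < δ}),
      ⋂ (q : {q : ℚ // q ≠ 0 ∧ |q| < δ.1}), ⋂ (q' : {q' : ℚ // q' ≠ 0 ∧ |q'| < δ.1}),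
      {a | |slq q.1 a - slq q'.1 a| ≤ (ε.1 : ℝ)} with hDiffdef
  have hDiffMeas : MeasurableSet Diff := by
    refine MeasurableSet.iInter (fun ε => MeasurableSet.iUnion (fun δ =>
      MeasurableSet.iInter (fun q => MeasurableSet.iInter (fun q' => ?_))))
    exact measurableSet_le ((hslq_meas q.1).sub (hslq_meas q'.1)).abs measurable_const
  have hDiff_iff : ∀ a, a ∈ Diff ↔ Crit (g a) (p a) := by
    intro a
    simp only [hDiffdef, mem_iInter, mem_iUnion, mem_setOf_eq, Subtype.forall, Subtype.exists]
    constructor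
    · intro H ε hε
      obtain ⟨δ, hδ, hH⟩ := H ε hε
      exact ⟨δ, hδ, fun q q' hq hq' hqδ hq'δ => hH q ⟨hq, hqδ⟩ q' ⟨hq', hq'δ⟩⟩
    · intro H ε hε
      obtain ⟨δ, hδ, hH⟩ := H ε hε
      exact ⟨δ, hδ, fun q hq q' hq' => hH q q' hq.1 hq'.1 hq.2 hq'.2⟩
  have hDiff_eq : ∀ a, a ∈ Diff ↔ DifferentiableAt ℝ (g a) (p a) := fun a =>
    (hDiff_iff a).trans ⟨fun h => differentiableAt_of_crit (hgc a) h,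
      fun h => crit_of_differentiableAt h⟩
  set limfun : α → ENNReal := fun a =>
    limsup (fun m : ℕ => ENNReal.ofReal (slq (1 / (m + 1)) a)) atTop with hlimfun
  have hlimfun_meas : Measurable limfun :=
    Measurable.limsup (fun m => (hslq_meas _).ennreal_ofReal)
  have key : (fun a => ENNReal.ofReal (deriv (g a) (p a))) = Diff.indicator limfun := by
    funext a
    by_cases ha : a ∈ Diff
    · rw [indicator_of_mem ha]
      have hdiff := (hDiff_eq a).1 ha
      have hs : Tendsto (slope (g a) (p a)) (𝓝[≠] (p a)) (𝓝 (deriv (g a) (p a))) :=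
        hasDerivAt_iff_tendsto_slope.1 hdiff.hasDerivAt
      have hseq : Tendsto (fun m : ℕ => p a + ((1 / (m + 1) : ℚ) : ℝ)) atTop (𝓝[≠] (p a)) := by
        rw [tendsto_nhdsWithin_iff]
        constructor
        · have : Tendsto (fun m : ℕ => ((1 / (m + 1) : ℚ) : ℝ)) atTop (𝓝 0) := by
            have : (fun m : ℕ => ((1 / (m + 1) : ℚ) : ℝ)) = fun m : ℕ => 1 / ((m : ℝ) + 1) := by
              funext m; push_cast; ring
            rw [this]
            exact tendsto_one_div_add_atTop_nhds_zero_nat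
          have h2 := (tendsto_const_nhds (x := p a)).add this
          simpa using h2
        · filter_upwards with m
          simp only [mem_compl_iff, mem_singleton_iff]
          have : (0 : ℝ) < ((1 / (m + 1) : ℚ) : ℝ) := by positivity
          intro hc
          nlinarith [hc]
      have hconv : Tendsto (fun m : ℕ => slq (1 / (m + 1)) a) atTop
          (𝓝 (deriv (g a) (p a))) := by
        have := hs.comp hseq
        convert this using 2 with m
        rw [Function.comp_apply, slope_eq]
      have : Tendsto (fun m : ℕ => ENNReal.ofReal (slq (1 / (m + 1)) a)) atTop
          (𝓝 (ENNReal.ofReal (deriv (g a) (p a)))) :=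
        (ENNReal.continuous_ofReal.tendsto _).comp hconv
      exact this.limsup_eq.symm
    · rw [indicator_of_notMem ha]
      rw [deriv_zero_of_not_differentiableAt (fun hd => ha ((hDiff_eq a).2 hd))]
      simp
  rw [key]
  exact hlimfun_meas.indicator hDiffMeas

end


lemma measurable_snoc_joint {m : ℕ} :
    Measurable (fun p : (Fin m → ℝ) × ℝ => (Fin.snoc p.1 p.2 : Fin (m+1) → ℝ)) := by
  apply measurable_pi_lambda
  intro j
  refine Fin.lastCases ?_ ?_ j
  · simpa [Fin.snoc_last] using measurable_snd
  · intro i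
    simp only [Fin.snoc_castSucc]
    exact (measurable_pi_apply i).comp measurable_fst

lemma measurable_snoc_left {m : ℕ} (c : ℝ) :
    Measurable (fun x' : Fin m → ℝ => (Fin.snoc x' c : Fin (m+1) → ℝ)) :=
  measurable_snoc_joint.comp (measurable_id.prodMk measurable_const)

lemma measurable_snoc_right {m : ℕ} (y : Fin m → ℝ) :
    Measurable (fun s : ℝ => (Fin.snoc y s : Fin (m+1) → ℝ)) :=
  measurable_snoc_joint.comp (measurable_const.prodMk measurable_id)

section Tri
variable {m : ℕ} {T : (Fin (m+1) → ℝ) → (Fin (m+1) → ℝ)} (htri : LowerTriangular T)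

/-- the truncated map -/
noncomputable def Strunc (T : (Fin (m+1) → ℝ) → (Fin (m+1) → ℝ)) :
    (Fin m → ℝ) → (Fin m → ℝ) :=
  fun x' k => T (Fin.snoc x' 0) k.castSucc

/-- the last-coordinate section -/
noncomputable def Glast (T : (Fin (m+1) → ℝ) → (Fin (m+1) → ℝ)) :
    (Fin m → ℝ) → ℝ → ℝ :=
  fun x' t => T (Fin.snoc x' t) (Fin.last m)

lemma ne_last_of_le_castSucc {j : Fin (m+1)} {k : Fin m} (h : j ≤ k.castSucc) :
    j ≠ Fin.last m := by
  intro hc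
  subst hc
  exact absurd (lt_of_le_of_lt h (Fin.castSucc_lt_last k)) (lt_irrefl _)

include htri

lemma htri_cast (x : Fin (m+1) → ℝ) (k : Fin m) :
    T x k.castSucc = Strunc T (Fin.init x) k := by
  refine htri k.castSucc x (Fin.snoc (Fin.init x) 0) (fun j hj => ?_)
  obtain ⟨i, rfl⟩ := Fin.exists_castSucc_eq.2 (ne_last_of_le_castSucc hj)
  rw [Fin.snoc_castSucc]
  rfl

lemma section_cast (x' : Fin m → ℝ) (a : ℝ) (k : Fin m) :
    (fun t => T (Function.update (Fin.snoc x' a) k.castSucc t) k.castSucc)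
      = fun t => Strunc T (Function.update x' k t) k := by
  funext t
  show _ = T (Fin.snoc (Function.update x' k t) 0) k.castSucc
  rw [Fin.snoc_update]
  refine htri k.castSucc _ _ (fun j hj => ?_)
  obtain ⟨i, rfl⟩ := Fin.exists_castSucc_eq.2 (ne_last_of_le_castSucc hj)
  rcases eq_or_ne i k with rfl | hik
  · simp [Function.update_self]
  · have hik' : i.castSucc ≠ k.castSucc := fun hc => hik (Fin.castSucc_injective _ hc)
    rw [Function.update_of_ne hik', Function.update_of_ne hik', Fin.snoc_castSucc,
      Fin.snoc_castSucc]

lemma section_last (x : Fin (m+1) → ℝ) :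
    (fun t => T (Function.update x (Fin.last m) t) (Fin.last m))
      = Glast T (Fin.init x) := by
  funext t
  have h : Fin.snoc (Fin.init x) t = Function.update x (Fin.last m) t := by
    rw [← Fin.update_snoc_last, Fin.snoc_init_self]
  show T _ _ = T (Fin.snoc (Fin.init x) t) _
  rw [h]

lemma T_snoc_decomp (x' : Fin m → ℝ) (a : ℝ) :
    T (Fin.snoc x' a) = Fin.snoc (Strunc T x') (Glast T x' a) := by
  funext j
  refine Fin.lastCases ?_ ?_ j
  · rw [Fin.snoc_last]; rfl
  · intro k
    rw [Fin.snoc_castSucc, htri_cast htri, Fin.init_snoc]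

lemma Strunc_tri : LowerTriangular (Strunc T) := by
  intro k x y hxy
  refine htri k.castSucc _ _ (fun j hj => ?_)
  obtain ⟨i, rfl⟩ := Fin.exists_castSucc_eq.2 (ne_last_of_le_castSucc hj)
  rw [Fin.snoc_castSucc, Fin.snoc_castSucc]
  exact hxy i (by exact_mod_cast Fin.castSucc_le_castSucc_iff.1 hj)

end Tri

lemma mono_deriv_nonneg {g : ℝ → ℝ} (hg : Monotone g) (t : ℝ) : 0 ≤ deriv g t := by
  by_cases h : DifferentiableAt ℝ g t
  · have hd : HasDerivAt g (deriv g t) t := h.hasDerivAt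
    rw [hasDerivAt_iff_tendsto_slope] at hd
    have hd' : Tendsto (slope g t) (𝓝[>] t) (𝓝 (deriv g t)) :=
      hd.mono_left (nhdsWithin_mono _ (fun y hy => ne_of_gt hy))
    refine ge_of_tendsto hd' ?_
    filter_upwards [self_mem_nhdsWithin] with y hy
    rw [slope_def_field]
    exact div_nonneg (sub_nonneg.2 (hg hy.le)) (sub_nonneg.2 hy.le)
  · rw [deriv_zero_of_not_differentiableAt h]

lemma oneD_map (g : ℝ → ℝ) (hmono : StrictMono g) (hcont : Continuous g)
    (hsurj : Function.Surjective g)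
    (hluzin : ∀ N : Set ℝ, volume N = 0 → volume (g '' N) = 0) :
    Measure.map g (volume.withDensity (fun t => ENNReal.ofReal (deriv g t))) = volume := by
  set e : ℝ ≃o ℝ := StrictMono.orderIsoOfSurjective g hmono hsurj with he
  have hg_e : ⇑e = g := rfl
  have hicoe : ∀ s : Set ℝ, ⇑e.symm ⁻¹' s = g '' s := fun s => by
    rw [← hg_e]; exact (e.toEquiv.image_eq_preimage_symm s).symm
  have hsymm_cont : Continuous e.symm := e.symm.toHomeomorph.continuous
  set f : StieltjesFunction ℝ :=
    ⟨g, hmono.monotone, fun x => (hcont.continuousAt).continuousWithinAt⟩ with hf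
  have hmap : f.measure = Measure.map e.symm volume := by
    refine Measure.ext_of_Ioc _ _ (fun a b hab => ?_)
    rw [Measure.map_apply hsymm_cont.measurable measurableSet_Ioc, hicoe, ← hg_e,
      e.image_Ioc, Real.volume_Ioc, f.measure_Ioc]
    rfl
  have hac : f.measure ≪ volume := by
    refine Measure.AbsolutelyContinuous.mk (fun s hs h0 => ?_)
    rw [hmap, Measure.map_apply hsymm_cont.measurable hs, hicoe]
    exact hluzin s h0
  have hdens : volume.withDensity (fun t => ENNReal.ofReal (deriv g t)) = f.measure := by
    rw [← Measure.withDensity_rnDeriv_eq f.measure volume hac]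
    refine withDensity_congr_ae ?_
    filter_upwards [f.ae_hasDerivAt, Measure.rnDeriv_lt_top f.measure volume] with t ht hlt
    have : deriv g t = (f.measure.rnDeriv volume t).toReal := ht.deriv
    rw [this, ENNReal.ofReal_toReal hlt.ne]
  rw [hdens, hmap, Measure.map_map hcont.measurable hsymm_cont.measurable]
  have : g ∘ ⇑e.symm = id := by
    funext x; simp [← hg_e]
  rw [this, Measure.map_id]

-- lintegral corollary
lemma oneD_lintegral (g : ℝ → ℝ) (hmono : StrictMono g) (hcont : Continuous g)
    (hsurj : Function.Surjective g)
    (hluzin : ∀ N : Set ℝ, volume N = 0 → volume (g '' N) = 0)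
    (F : ℝ → ENNReal) (hF : Measurable F) :
    ∫⁻ t, F (g t) * ENNReal.ofReal (deriv g t) = ∫⁻ s, F s := by
  conv_rhs => rw [← oneD_map g hmono hcont hsurj hluzin]
  rw [lintegral_map hF hcont.measurable,
    lintegral_withDensity_eq_lintegral_mul (g := fun a => F (g a)) volume
      (measurable_deriv g).ennreal_ofReal (hF.comp hcont.measurable)]
  congr 1; funext t; exact mul_comm _ _

section J
variable {n : ℕ}

lemma Jmeas (T : (Fin n → ℝ) → (Fin n → ℝ)) (hTmeas : Measurable T)
    (hmono : ∀ (k : Fin n) (x : Fin n → ℝ), StrictMono (fun t => T (Function.update x k t) k))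
    (hcont : ∀ (k : Fin n) (x : Fin n → ℝ), Continuous (fun t => T (Function.update x k t) k)) :
    Measurable (fun x => ENNReal.ofReal
      (∏ k : Fin n, deriv (fun t => T (Function.update x k t) k) (x k))) := by
  have heq : (fun x => ENNReal.ofReal
      (∏ k : Fin n, deriv (fun t => T (Function.update x k t) k) (x k)))
      = fun x => ∏ k : Fin n, ENNReal.ofReal (deriv (fun t => T (Function.update x k t) k) (x k)) := by
    funext x
    exact ENNReal.ofReal_prod_of_nonneg
      (fun k _ => mono_deriv_nonneg (hmono k x).monotone _)
  rw [heq]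
  refine Finset.measurable_prod _ (fun k _ => ?_)
  exact measurable_ofReal_deriv_param (fun x t => T (Function.update x k t) k)
    (fun x => x k)
    ((measurable_pi_apply k).comp (hTmeas.comp measurable_update'))
    (measurable_pi_apply k) (fun x => hcont k x)

end J

lemma key_map : ∀ (n : ℕ) (T : (Fin n → ℝ) → (Fin n → ℝ)),
    Measurable T → Function.Bijective T → LowerTriangular T →
    (∀ (k : Fin n) (x : Fin n → ℝ), StrictMono (fun t => T (Function.update x k t) k)) →
    (∀ (k : Fin n) (x : Fin n → ℝ), Continuous (fun t => T (Function.update x k t) k)) →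
    (∀ (k : Fin n) (x : Fin n → ℝ), Function.Surjective (fun t => T (Function.update x k t) k)) →
    (∀ (k : Fin n) (x : Fin n → ℝ) (N : Set ℝ),
      volume N = 0 → volume ((fun t => T (Function.update x k t) k) '' N) = 0) →
    Measure.map T (volume.withDensity
      (fun x => ENNReal.ofReal
        (∏ k : Fin n, deriv (fun t => T (Function.update x k t) k) (x k)))) = volume := by
  intro n
  induction n with
  | zero =>
    intro T _ _ _ _ _ _ _
    have hT : T = id := funext fun x => Subsingleton.elim _ _
    have hJ : (fun x : Fin 0 → ℝ => ENNReal.ofReal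
        (∏ k : Fin 0, deriv (fun t => T (Function.update x k t) k) (x k))) = 1 := by
      funext x; simp
    rw [hJ, withDensity_one, hT, Measure.map_id]
  | succ m ih =>
    intro T hTmeas hTbij htri hmono hcont hsurj hluzin
    set S := Strunc T with hSdef
    set g := Glast T with hgdef
    -- hypotheses for sections of S
    have hSmono : ∀ (k : Fin m) (x' : Fin m → ℝ),
        StrictMono (fun t => S (Function.update x' k t) k) := by
      intro k x'
      have := hmono k.castSucc (Fin.snoc x' 0)
      rwa [section_cast htri] at this
    have hScont : ∀ (k : Fin m) (x' : Fin m → ℝ),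
        Continuous (fun t => S (Function.update x' k t) k) := by
      intro k x'
      have := hcont k.castSucc (Fin.snoc x' 0)
      rwa [section_cast htri] at this
    have hSsurj : ∀ (k : Fin m) (x' : Fin m → ℝ),
        Function.Surjective (fun t => S (Function.update x' k t) k) := by
      intro k x'
      have := hsurj k.castSucc (Fin.snoc x' 0)
      rwa [section_cast htri] at this
    have hSluzin : ∀ (k : Fin m) (x' : Fin m → ℝ) (N : Set ℝ),
        volume N = 0 → volume ((fun t => S (Function.update x' k t) k) '' N) = 0 := by
      intro k x' N hN
      have := hluzin k.castSucc (Fin.snoc x' 0) N hN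
      rwa [section_cast htri] at this
    -- hypotheses for the last section g
    have hgmono : ∀ x', StrictMono (g x') := by
      intro x'
      have := hmono (Fin.last m) (Fin.snoc x' 0)
      rwa [section_last htri, Fin.init_snoc] at this
    have hgcont : ∀ x', Continuous (g x') := by
      intro x'
      have := hcont (Fin.last m) (Fin.snoc x' 0)
      rwa [section_last htri, Fin.init_snoc] at this
    have hgsurj : ∀ x', Function.Surjective (g x') := by
      intro x'
      have := hsurj (Fin.last m) (Fin.snoc x' 0)
      rwa [section_last htri, Fin.init_snoc] at this
    have hgluzin : ∀ x' (N : Set ℝ), volume N = 0 → volume (g x' '' N) = 0 := by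
      intro x' N hN
      have := hluzin (Fin.last m) (Fin.snoc x' 0) N hN
      rwa [section_last htri, Fin.init_snoc] at this
    have hS_meas : Measurable S :=
      measurable_pi_lambda _ fun k =>
        (measurable_pi_apply _).comp (hTmeas.comp (measurable_snoc_left 0))
    have hSbij : Function.Bijective S := by
      constructor
      · intro x' y' hxy
        obtain ⟨s, hs⟩ : ∃ s, g y' s = g x' 0 := hgsurj y' (g x' 0)
        have hTeq : T (Fin.snoc x' 0) = T (Fin.snoc y' s) := by
          rw [T_snoc_decomp htri, T_snoc_decomp htri, ← hSdef, ← hgdef, hxy, hs]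
        have := hTbij.1 hTeq
        have h2 := congrArg Fin.init this
        rwa [Fin.init_snoc, Fin.init_snoc] at h2
      · intro z
        obtain ⟨w, hw⟩ := hTbij.2 (Fin.snoc z 0)
        refine ⟨Fin.init w, funext fun k => ?_⟩
        rw [hSdef, ← htri_cast htri, hw, Fin.snoc_castSucc]
    -- Jacobian densities
    set JT : (Fin (m+1) → ℝ) → ENNReal := fun x => ENNReal.ofReal
      (∏ k : Fin (m+1), deriv (fun t => T (Function.update x k t) k) (x k)) with hJTdef
    set JS : (Fin m → ℝ) → ENNReal := fun x' => ENNReal.ofReal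
      (∏ k : Fin m, deriv (fun t => S (Function.update x' k t) k) (x' k)) with hJSdef
    have hJT : Measurable JT := Jmeas T hTmeas hmono hcont
    have hJS : Measurable JS := Jmeas S hS_meas hSmono hScont
    have factA : ∀ (x' : Fin m → ℝ) (a : ℝ),
        JT (Fin.snoc x' a) = JS x' * ENNReal.ofReal (deriv (g x') a) := by
      intro x' a
      have hprod : (∏ k : Fin (m+1),
            deriv (fun t => T (Function.update (Fin.snoc x' a) k t) k) ((Fin.snoc x' a : Fin (m+1) → ℝ) k))
          = (∏ k : Fin m, deriv (fun t => S (Function.update x' k t) k) (x' k))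
            * deriv (g x') a := by
        rw [Fin.prod_univ_castSucc]
        congr 1
        · refine Finset.prod_congr rfl (fun k _ => ?_)
          rw [section_cast htri, Fin.snoc_castSucc]
        · rw [section_last htri, Fin.init_snoc, Fin.snoc_last]
      rw [hJTdef]
      simp only []
      rw [hprod, ENNReal.ofReal_mul
        (Finset.prod_nonneg (fun k _ => mono_deriv_nonneg (hSmono k x').monotone _))]
    -- the measurable equivalence
    set e := MeasurableEquiv.piFinSuccAbove (fun _ : Fin (m+1) => ℝ) (Fin.last m) with hedef
    have hMP : MeasurePreserving e volume volume :=
      volume_preserving_piFinSuccAbove (fun _ : Fin (m+1) => ℝ) (Fin.last m)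
    have hesymm : ∀ p : ℝ × (Fin m → ℝ), e.symm p = Fin.snoc p.2 p.1 := by
      intro p
      simp only [hedef, MeasurableEquiv.piFinSuccAbove_symm_apply, Fin.insertNthEquiv,
        Equiv.coe_fn_mk, Fin.insertNth_last']
    have hMPsymm : MeasurePreserving (⇑e.symm) volume volume := hMP.symm e
    refine Measure.ext (fun A hA => ?_)
    rw [Measure.map_apply hTmeas hA, withDensity_apply _ (hTmeas hA),
      ← lintegral_indicator (hTmeas hA) _]
    have hind : ∀ x, (T ⁻¹' A).indicator JT x
        = A.indicator (1 : (Fin (m+1) → ℝ) → ENNReal) (T x) * JT x := by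
      intro x
      by_cases hx : T x ∈ A
      · rw [Set.indicator_of_mem hx, Set.indicator_of_mem (Set.mem_preimage.2 hx)]
        simp
      · rw [Set.indicator_of_notMem hx, Set.indicator_of_notMem
          (fun hc => hx (Set.mem_preimage.1 hc))]
        simp
    rw [lintegral_congr hind]
    set F : (Fin (m+1) → ℝ) → ENNReal := fun x => A.indicator 1 (T x) * JT x with hFdef
    have hFmeas : Measurable F := ((measurable_one.indicator hA).comp hTmeas).mul hJT
    rw [← hMPsymm.lintegral_comp hFmeas]
    set h : (Fin m → ℝ) → ENNReal :=
      fun y => ∫⁻ s, A.indicator (1 : (Fin (m+1) → ℝ) → ENNReal) (Fin.snoc y s) ∂volume with hhdef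
    have hhmeas : Measurable h := by
      have hj : Measurable fun q : (Fin m → ℝ) × ℝ =>
          A.indicator (1 : (Fin (m+1) → ℝ) → ENNReal) (Fin.snoc q.1 q.2) :=
        (measurable_one.indicator hA).comp measurable_snoc_joint
      exact Measurable.lintegral_prod_right hj
    have hint : ∀ p : ℝ × (Fin m → ℝ), F (e.symm p)
        = JS p.2 * (A.indicator (1 : (Fin (m+1) → ℝ) → ENNReal)
            (Fin.snoc (S p.2) (g p.2 p.1)) * ENNReal.ofReal (deriv (g p.2) p.1)) := by
      intro p
      show A.indicator 1 (T (e.symm p)) * JT (e.symm p) = _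
      rw [hesymm, T_snoc_decomp htri, ← hSdef, ← hgdef, factA]
      ring
    have hjoint : Measurable fun p : ℝ × (Fin m → ℝ) =>
        JS p.2 * (A.indicator (1 : (Fin (m+1) → ℝ) → ENNReal)
          (Fin.snoc (S p.2) (g p.2 p.1)) * ENNReal.ofReal (deriv (g p.2) p.1)) := by
      have heq2 : (fun p : ℝ × (Fin m → ℝ) =>
          JS p.2 * (A.indicator (1 : (Fin (m+1) → ℝ) → ENNReal)
            (Fin.snoc (S p.2) (g p.2 p.1)) * ENNReal.ofReal (deriv (g p.2) p.1)))
          = fun p => F (e.symm p) := by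
        funext p; rw [hint]
      rw [heq2]
      exact hFmeas.comp e.symm.measurable
    rw [lintegral_congr hint, Measure.volume_eq_prod, lintegral_prod_symm _ hjoint.aemeasurable]
    have hinner : ∀ x' : Fin m → ℝ,
        (∫⁻ a, JS x' * (A.indicator (1 : (Fin (m+1) → ℝ) → ENNReal)
          (Fin.snoc (S x') (g x' a)) * ENNReal.ofReal (deriv (g x') a)) ∂volume)
        = JS x' * h (S x') := by
      intro x'
      rw [lintegral_const_mul' _ _ ENNReal.ofReal_ne_top, hhdef]
      congr 1
      exact oneD_lintegral (g x') (hgmono x') (hgcont x') (hgsurj x') (hgluzin x')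
        (fun s => A.indicator 1 (Fin.snoc (S x') s))
        ((measurable_one.indicator hA).comp (measurable_snoc_right _))
    have hwd : (∫⁻ x', h (S x') ∂(volume.withDensity JS)) = ∫⁻ x', JS x' * h (S x') ∂volume := by
      rw [lintegral_withDensity_eq_lintegral_mul (g := fun x' => h (S x')) volume hJS (hhmeas.comp hS_meas)]
      rfl
    rw [lintegral_congr hinner, ← hwd,
      ← lintegral_map hhmeas hS_meas, hJSdef,
      ih S hS_meas hSbij (Strunc_tri htri) hSmono hScont hSsurj hSluzin]
    have hback : (∫⁻ y, h y ∂(volume : Measure (Fin m → ℝ)))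
        = ∫⁻ p, A.indicator (1 : (Fin (m+1) → ℝ) → ENNReal) (e.symm p)
            ∂((volume : Measure ℝ).prod (volume : Measure (Fin m → ℝ))) := by
      rw [lintegral_prod_symm (f := fun p : ℝ × (Fin m → ℝ) =>
          A.indicator (1 : (Fin (m+1) → ℝ) → ENNReal) (e.symm p))
        (((measurable_one.indicator hA).comp e.symm.measurable)).aemeasurable]
      refine lintegral_congr (fun y => ?_)
      rw [hhdef]
      refine lintegral_congr (fun s => ?_)
      rw [hesymm]
    rw [hback, ← Measure.volume_eq_prod, hMPsymm.lintegral_comp (measurable_one.indicator hA),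
      lintegral_indicator hA _]
    simp

end Aux

/-- **Change of variables for monotone triangular maps (Bogachev–Kolesnikov–Medvedev).**
Let `T` be a measurable lower triangular bijection of `ℝⁿ` whose diagonal sections are strictly
increasing continuous bijections of `ℝ` satisfying Luzin's condition (N).  With
`det∇T(x) = ∏ₖ (d/dt) T(update x k t)ₖ |_{t = xₖ}` (defined a.e., with `deriv = 0` where the
derivative does not exist), every integrable `φ` satisfies
`∫ φ(y) dy = ∫ φ(T x) det∇T(x) dx`, and for every probability density `ρ` the pullback of
`volume.withDensity ρ` under `T` has Lebesgue density `x ↦ ρ(T x) · det∇T(x)`. -/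
theorem triangular_change_of_variables
    (n : ℕ) (hn : 0 < n)
    (T : (Fin n → ℝ) → (Fin n → ℝ))
    (hTmeas : Measurable T) (hTbij : Function.Bijective T)
    (hTtri : LowerTriangular T)
    (hmono : ∀ (k : Fin n) (x : Fin n → ℝ),
      StrictMono (fun t => T (Function.update x k t) k))
    (hcont : ∀ (k : Fin n) (x : Fin n → ℝ),
      Continuous (fun t => T (Function.update x k t) k))
    (hsurj : ∀ (k : Fin n) (x : Fin n → ℝ),
      Function.Surjective (fun t => T (Function.update x k t) k))
    (hluzin : ∀ (k : Fin n) (x : Fin n → ℝ) (N : Set ℝ),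
      volume N = 0 → volume ((fun t => T (Function.update x k t) k) '' N) = 0) :
    (∀ φ : (Fin n → ℝ) → ℝ, Integrable φ →
      ∫ y, φ y =
        ∫ x, φ (T x) * ∏ k : Fin n, deriv (fun t => T (Function.update x k t) k) (x k)) ∧
    (∀ ρ : (Fin n → ℝ) → ℝ, Measurable ρ → (∀ x, 0 ≤ ρ x) → (∫ x, ρ x) = 1 →
      Measure.map (Function.invFun T)
          ((volume : Measure (Fin n → ℝ)).withDensity (fun x => ENNReal.ofReal (ρ x))) =
        (volume : Measure (Fin n → ℝ)).withDensity
          (fun x => ENNReal.ofReal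
            (ρ (T x) * ∏ k : Fin n, deriv (fun t => T (Function.update x k t) k) (x k)))) := by
  set J : (Fin n → ℝ) → ℝ :=
    fun x => ∏ k : Fin n, deriv (fun t => T (Function.update x k t) k) (x k) with hJdef
  have hJnonneg : ∀ x, 0 ≤ J x := fun x =>
    Finset.prod_nonneg (fun k _ => mono_deriv_nonneg (hmono k x).monotone _)
  have hKey : Measure.map T (volume.withDensity (fun x => ENNReal.ofReal (J x))) = volume :=
    key_map n T hTmeas hTbij hTtri hmono hcont hsurj hluzin
  have hJE : Measurable (fun x => ENNReal.ofReal (J x)) := Jmeas T hTmeas hmono hcont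
  have hJmeas : Measurable J := by
    have : (fun x => (ENNReal.ofReal (J x)).toReal) = J :=
      funext fun x => ENNReal.toReal_ofReal (hJnonneg x)
    exact this ▸ hJE.ennreal_toReal
  set ν := volume.withDensity (fun x => ENNReal.ofReal (J x)) with hνdef
  constructor
  · intro φ hφ
    have h1 : ∫ y, φ y = ∫ y, φ y ∂(Measure.map T ν) := by rw [hKey]
    have h2 : ∫ y, φ y ∂(Measure.map T ν) = ∫ x, φ (T x) ∂ν :=
      integral_map hTmeas.aemeasurable (hKey.symm ▸ hφ.1)
    have h3 : ∫ x, φ (T x) ∂ν = ∫ x, (J x).toNNReal • φ (T x) ∂volume := by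
      rw [hνdef]
      exact integral_withDensity_eq_integral_smul
        (measurable_real_toNNReal.comp hJmeas) (fun x => φ (T x))
    rw [h1, h2, h3]
    congr 1
    funext x
    rw [NNReal.smul_def, smul_eq_mul, Real.coe_toNNReal _ (hJnonneg x), mul_comm]
  · intro ρ hρmeas hρnonneg _
    set ν' := volume.withDensity (fun x => ENNReal.ofReal (ρ (T x) * J x)) with hν'def
    have hinv_eq : ∀ s : Set (Fin n → ℝ), Function.invFun T ⁻¹' s = T '' s := by
      intro s
      ext x
      constructor
      · intro hx
        exact ⟨Function.invFun T x, hx, Function.rightInverse_invFun hTbij.2 x⟩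
      · rintro ⟨y, hy, rfl⟩
        rwa [Set.mem_preimage, Function.leftInverse_invFun hTbij.1 y]
    have hemb : MeasurableEmbedding T := hTmeas.measurableEmbedding hTbij.1
    have hinv_meas : Measurable (Function.invFun T) := by
      intro s hs
      rw [hinv_eq s]
      exact hemb.measurableSet_image' hs
    have hmapT : Measure.map T ν' = volume.withDensity (fun x => ENNReal.ofReal (ρ x)) := by
      refine Measure.ext (fun A hA => ?_)
      rw [Measure.map_apply hTmeas hA, hν'def, withDensity_apply _ (hTmeas hA),
        ← lintegral_indicator (hTmeas hA) _]
      have hptwise : ∀ x, (T ⁻¹' A).indicator (fun x => ENNReal.ofReal (ρ (T x) * J x)) x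
          = ENNReal.ofReal (J x) * A.indicator (fun y => ENNReal.ofReal (ρ y)) (T x) := by
        intro x
        by_cases hx : T x ∈ A
        · rw [Set.indicator_of_mem hx, Set.indicator_of_mem (Set.mem_preimage.2 hx),
            ENNReal.ofReal_mul (hρnonneg (T x)), mul_comm]
        · rw [Set.indicator_of_notMem hx, Set.indicator_of_notMem
            (fun hc => hx (Set.mem_preimage.1 hc)), mul_zero]
      have hgm : Measurable fun x => A.indicator (fun y => ENNReal.ofReal (ρ y)) (T x) :=
        (hρmeas.ennreal_ofReal.indicator hA).comp hTmeas
      have hwd2 : (∫⁻ x, A.indicator (fun y => ENNReal.ofReal (ρ y)) (T x) ∂ν)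
          = ∫⁻ x, ENNReal.ofReal (J x)
              * A.indicator (fun y => ENNReal.ofReal (ρ y)) (T x) ∂volume := by
        rw [hνdef, lintegral_withDensity_eq_lintegral_mul
          (g := fun x => A.indicator (fun y => ENNReal.ofReal (ρ y)) (T x)) volume hJE hgm]
        rfl
      rw [lintegral_congr hptwise, ← hwd2,
        ← lintegral_map (hρmeas.ennreal_ofReal.indicator hA) hTmeas, hKey,
        lintegral_indicator hA _, withDensity_apply _ hA]
    rw [← hmapT, Measure.map_map hinv_meas hTmeas]
    have : Function.invFun T ∘ T = id := funext (Function.leftInverse_invFun hTbij.1)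
    rw [this, Measure.map_id]
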